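/- Let δ ∈ F_{q^m} \ F_q and let d be the smallest integer > 1 dividing m with δ ∈ F_{q^d}. Let L_δ ⊆ F_{q^m}[T] be the F_q-linear span of the polynomials f_{α,β}(T, δT) = Tr(αT)Tr(βδT) − Tr(αδT)Tr(βT) over all α, β ∈ F_{q^m}. Then the F_{q^m}-linear span of L_δ equals the F_{q^m}-span of {(δ^{q^j} − δ^{q^i}) T^{q^i+q^j} : 0 ≤ i < j ≤ m−1, d ∤ (j−i)}; in particular, dim over appropriate field of this monomial span is C(m,2) − C(m/d, 2)·d. -/

import Mathlib

open Polynomial Finset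

/-- The polynomial ∑_{j=0}^{m−1} c^{q^j} T^{q^j} ∈ F_{q^m}[T], i.e. Tr(cT) with Tr expanded. -/
noncomputable def trPoly (q m : ℕ) (K : Type) [Field K] (c : K) : Polynomial K :=
  ∑ j ∈ range m, C (c ^ q ^ j) * X ^ q ^ j

section Aux

lemma vanish_lin (q m : ℕ) (hq : 2 ≤ q) (K : Type) [Field K] [Fintype K]
    (hK : Fintype.card K = q ^ m) (c : ℕ → K)
    (h : ∀ x : K, ∑ i ∈ range m, c i * x ^ q ^ i = 0) : ∀ i < m, c i = 0 := by
  have hqpow : StrictMono (fun i : ℕ => q ^ i) := fun a b hab => Nat.pow_lt_pow_right hq hab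
  rcases Nat.eq_zero_or_pos m with rfl | hm0
  · omega
  set P : Polynomial K := ∑ i ∈ range m, C (c i) * X ^ q ^ i with hP
  have hdeg : P.natDegree < Fintype.card K := by
    rw [hK]
    refine lt_of_le_of_lt
      (Polynomial.natDegree_sum_le_of_forall_le (range m) _ (n := q ^ (m - 1)) ?_) ?_
    · intro i hi
      refine le_trans (Polynomial.natDegree_C_mul_le _ _)
        (le_trans (Polynomial.natDegree_X_pow_le _) ?_)
      exact Nat.pow_le_pow_right (by omega) (by have := mem_range.mp hi; omega)
    · exact Nat.pow_lt_pow_right hq (by omega)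
  have hPz : P = 0 := by
    apply Polynomial.eq_zero_of_natDegree_lt_card_of_eval_eq_zero P Function.injective_id _ _
    · intro x
      simpa [hP, Polynomial.eval_finset_sum] using h x
    · simpa using hdeg
  intro i hi
  have hc : P.coeff (q ^ i) = c i := by
    rw [hP, Polynomial.finset_sum_coeff]
    rw [Finset.sum_eq_single i]
    · simp
    · intro j hj hji
      have hx : (X ^ q ^ j : Polynomial K).coeff (q ^ i) = 0 := by
        rw [Polynomial.coeff_X_pow, if_neg (fun hh => hji (hqpow.injective hh.symm))]
      simp [Polynomial.coeff_C_mul, hx]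
    · intro hi'; exact absurd (mem_range.mpr hi) hi'
  rw [hPz] at hc
  simpa using hc.symm

lemma vanish_bilin (q m : ℕ) (hq : 2 ≤ q) (K : Type) [Field K] [Fintype K]
    (hK : Fintype.card K = q ^ m) (u : ℕ → ℕ → K)
    (h : ∀ α β : K, ∑ i ∈ range m, ∑ j ∈ range m, u i j * α ^ q ^ i * β ^ q ^ j = 0) :
    ∀ i < m, ∀ j < m, u i j = 0 := by
  intro i hi j hj
  have h1 : ∀ β : K, ∀ i' < m, (∑ j ∈ range m, u i' j * β ^ q ^ j) = 0 := by
    intro β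
    apply vanish_lin q m hq K hK (fun i' => ∑ j ∈ range m, u i' j * β ^ q ^ j)
    intro α
    rw [← h α β]
    refine Finset.sum_congr rfl fun i' _ => ?_
    rw [Finset.sum_mul]
    refine Finset.sum_congr rfl fun j' _ => ?_
    ring
  exact vanish_lin q m hq K hK (fun j' => u i j') (fun β => h1 β i hi) j hj

variable {K : Type} [Field K]

lemma pow_qpow_add (q : ℕ) (x : K) (a b : ℕ) : x ^ q ^ (a + b) = (x ^ q ^ a) ^ q ^ b := by
  rw [pow_add, pow_mul]

lemma pow_q_inj (q m : ℕ) [Fintype K] (hK : Fintype.card K = q ^ m) (i : ℕ) (hi : i ≤ m) :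
    Function.Injective (fun x : K => x ^ q ^ i) := by
  intro x y hxy
  have hx : (x ^ q ^ i) ^ q ^ (m - i) = x := by
    rw [← pow_qpow_add, show i + (m - i) = m by omega, ← hK, FiniteField.pow_card]
  have hy : (y ^ q ^ i) ^ q ^ (m - i) = y := by
    rw [← pow_qpow_add, show i + (m - i) = m by omega, ← hK, FiniteField.pow_card]
  rw [← hx, ← hy]
  simp only at hxy
  rw [hxy]

lemma frob_dvd_iff (q m d : ℕ) [Fintype K] (hm : 2 ≤ m)
    (hK : Fintype.card K = q ^ m) (δ : K) (hδ : δ ^ q ≠ δ) (hd1 : 1 < d)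
    (hδd : δ ^ q ^ d = δ)
    (hmin : ∀ e, 1 < e → e ∣ m → δ ^ q ^ e = δ → d ≤ e) :
    ∀ e, δ ^ q ^ e = δ ↔ d ∣ e := by
  have hmul : ∀ a k, δ ^ q ^ a = δ → δ ^ q ^ (a * k) = δ := by
    intro a k ha
    induction k with
    | zero => simp
    | succ n ih =>
      rw [Nat.mul_succ, pow_qpow_add, ih, ha]
  have hδm : δ ^ q ^ m = δ := by
    rw [← hK]; exact FiniteField.pow_card δ
  have hex : ∃ e, 0 < e ∧ δ ^ q ^ e = δ := ⟨m, by omega, hδm⟩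
  classical
  let d' := Nat.find hex
  have hd'spec : 0 < d' ∧ δ ^ q ^ d' = δ := Nat.find_spec hex
  have hd'min : ∀ e, 0 < e → δ ^ q ^ e = δ → d' ≤ e := fun e he hfe =>
    Nat.find_le ⟨he, hfe⟩
  have hd'dvd : ∀ e, δ ^ q ^ e = δ → d' ∣ e := by
    intro e he
    rcases Nat.eq_zero_or_pos e with rfl | hepos
    · exact dvd_zero d'
    have hr : δ ^ q ^ (e % d') = δ := by
      have h1 : δ ^ q ^ (d' * (e / d') + e % d') = δ ^ q ^ (e % d') := by
        rw [pow_qpow_add (q := q), hmul d' (e / d') hd'spec.2]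
      rw [← h1, show d' * (e / d') + e % d' = e from Nat.div_add_mod e d', he]
    rcases Nat.eq_zero_or_pos (e % d') with hz | hpos
    · exact Nat.dvd_of_mod_eq_zero hz
    · have := hd'min _ hpos hr
      have := Nat.mod_lt e hd'spec.1
      omega
  have hd'1 : 1 < d' := by
    rcases Nat.lt_or_ge d' 2 with h2 | h2
    · interval_cases d'
      · exact absurd hd'spec.1 (by omega)
      · exact absurd (by simpa using hd'spec.2) hδ
    · omega
  have hdd' : d = d' := by
    have h1 : d' ∣ d := hd'dvd d hδd
    have h2 : d ≤ d' := hmin d' hd'1 (hd'dvd m hδm) hd'spec.2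
    have := Nat.le_of_dvd (by omega) h1
    omega
  intro e
  constructor
  · intro he; rw [hdd']; exact hd'dvd e he
  · rintro ⟨k, rfl⟩; exact hmul d k hδd

lemma frob_eq_iff (q m d : ℕ) [Fintype K] (hm : 2 ≤ m)
    (hK : Fintype.card K = q ^ m) (δ : K) (hδ : δ ^ q ≠ δ) (hd1 : 1 < d)
    (hδd : δ ^ q ^ d = δ)
    (hmin : ∀ e, 1 < e → e ∣ m → δ ^ q ^ e = δ → d ≤ e)
    (hq : 2 ≤ q) (i j : ℕ) (hij : i ≤ j) (him : i ≤ m) :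
    δ ^ q ^ j = δ ^ q ^ i ↔ d ∣ (j - i) := by
  have h1 : δ ^ q ^ j = (δ ^ q ^ (j - i)) ^ q ^ i := by
    rw [← pow_qpow_add, show j - i + i = j by omega]
  rw [h1]
  constructor
  · intro h
    have := pow_q_inj q m hK i him (by simpa using h)
    exact (frob_dvd_iff q m d hm hK δ hδ hd1 hδd hmin (j - i)).mp this
  · intro h
    rw [(frob_dvd_iff q m d hm hK δ hδ hd1 hδd hmin (j - i)).mpr h]

lemma trPoly_mul (q m : ℕ) (a b : K) :
    trPoly q m K a * trPoly q m K b =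
      ∑ i ∈ range m, ∑ j ∈ range m, C (a ^ q ^ i * b ^ q ^ j) * X ^ (q ^ i + q ^ j) := by
  rw [trPoly, trPoly, Finset.sum_mul_sum]
  refine Finset.sum_congr rfl fun i _ => Finset.sum_congr rfl fun j _ => ?_
  rw [C_mul, pow_add]; ring

lemma f_expand (q m : ℕ) (δ α β : K) :
    trPoly q m K α * trPoly q m K (β * δ) - trPoly q m K (α * δ) * trPoly q m K β =
      ∑ i ∈ range m, ∑ j ∈ range m,
        (α ^ q ^ i * β ^ q ^ j) • (C (δ ^ q ^ j - δ ^ q ^ i) * X ^ (q ^ i + q ^ j)) := by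
  rw [trPoly_mul, trPoly_mul, ← Finset.sum_sub_distrib]
  refine Finset.sum_congr rfl fun i _ => ?_
  rw [← Finset.sum_sub_distrib]
  refine Finset.sum_congr rfl fun j _ => ?_
  rw [Polynomial.smul_eq_C_mul, ← mul_assoc, ← C_mul, ← sub_mul, ← C_sub, mul_pow, mul_pow]
  congr 2
  ring

lemma exp_inj (q : ℕ) (hq : 2 ≤ q) {i j i' j' : ℕ} (h1 : i < j) (h2 : i' < j')
    (h : q ^ i + q ^ j = q ^ i' + q ^ j') : i = i' ∧ j = j' := by
  have hqpow : StrictMono (fun i : ℕ => q ^ i) := fun a b hab => Nat.pow_lt_pow_right hq hab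
  have key : ∀ a b a' b' : ℕ, a < b → a' < b' → a < a' →
      q ^ a + q ^ b = q ^ a' + q ^ b' → False := by
    intro a b a' b' hab ha'b' haa' heq
    have hd1 : q ^ (a + 1) ∣ q ^ b := pow_dvd_pow q (by omega)
    have hd2 : q ^ (a + 1) ∣ q ^ a' := pow_dvd_pow q (by omega)
    have hd3 : q ^ (a + 1) ∣ q ^ b' := pow_dvd_pow q (by omega)
    have hda : q ^ (a + 1) ∣ q ^ a := by
      have : q ^ a = q ^ a' + q ^ b' - q ^ b := by omega
      rw [this]
      exact Nat.dvd_sub (dvd_add hd2 hd3) hd1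
    have h5 := Nat.le_of_dvd (by positivity) hda
    have h6 : q ^ a < q ^ (a + 1) := hqpow (show a < a + 1 by omega)
    omega
  have hii : i = i' := by
    rcases lt_trichotomy i i' with h' | h' | h'
    · exact absurd (key i j i' j' h1 h2 h' h) not_false
    · exact h'
    · exact absurd (key i' j' i j h2 h1 h' h.symm) not_false
  subst hii
  refine ⟨rfl, hqpow.injective ?_⟩
  omega

lemma card_pairs (m : ℕ) (P : ℕ → ℕ → Prop) [∀ i j, Decidable (P i j)] :
    #((range m ×ˢ range m).filter fun p : ℕ × ℕ => p.1 < p.2 ∧ P p.1 p.2) =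
      ∑ j ∈ range m, #((range j).filter fun i => P i j) := by
  classical
  have hset : ((range m ×ˢ range m).filter fun p : ℕ × ℕ => p.1 < p.2 ∧ P p.1 p.2) =
      (range m).biUnion fun j => ((range j).filter fun i => P i j).image fun i => (i, j) := by
    ext ⟨i, j⟩
    simp only [mem_filter, mem_product, mem_range, mem_biUnion, mem_image, Prod.mk.injEq]
    constructor
    · rintro ⟨⟨hi, hj⟩, hij, hP⟩
      exact ⟨j, hj, i, by simp [hij, hP]⟩
    · rintro ⟨j', hj', i', ⟨hii, hP⟩, rfl, rfl⟩
      exact ⟨⟨hii.trans hj', hj'⟩, hii, hP⟩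
  rw [hset, Finset.card_biUnion]
  · refine Finset.sum_congr rfl fun j _ => ?_
    rw [Finset.card_image_of_injective _ (fun a b h => (Prod.mk.injEq ..).mp h |>.1)]
  · intro a _ b _ hab
    simp only [Finset.disjoint_left, mem_image]
    rintro ⟨i, j⟩ ⟨i', hi', h⟩ ⟨i'', hi'', h'⟩
    simp only [Prod.mk.injEq] at h h'
    exact hab (h.2.trans h'.2.symm)

lemma card_lt_pairs (m : ℕ) :
    #((range m ×ˢ range m).filter fun p : ℕ × ℕ => p.1 < p.2) = m.choose 2 := by
  classical
  have heq : (range m ×ˢ range m).filter (fun p : ℕ × ℕ => p.1 < p.2) =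
      (range m ×ˢ range m).filter
        (fun p : ℕ × ℕ => p.1 < p.2 ∧ (fun _ _ : ℕ => True) p.1 p.2) := by
    apply Finset.filter_congr; intro p _; simp
  rw [heq, card_pairs m (fun _ _ => True)]
  simp only [Finset.filter_true, card_range]
  rw [Finset.sum_range_id, Nat.choose_two_right]

lemma fiber_card (d j : ℕ) (hd : 0 < d) :
    #((range j).filter fun i => d ∣ (j - i)) = j / d := by
  have hset : ((range j).filter fun i => d ∣ (j - i)) =
      (range (j / d)).image fun k => j - d * (k + 1) := by
    ext i
    simp only [mem_filter, mem_range, mem_image]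
    constructor
    · rintro ⟨hij, s, hs⟩
      have hs1 : 1 ≤ s := by
        rcases Nat.eq_zero_or_pos s with rfl | h
        · omega
        · exact h
      have hds : d * s ≤ j := by omega
      have hsd : s ≤ j / d := Nat.le_div_iff_mul_le hd |>.mpr (by rw [Nat.mul_comm]; omega)
      refine ⟨s - 1, by omega, ?_⟩
      have h1 : s - 1 + 1 = s := by omega
      rw [h1]; omega
    · rintro ⟨k, hk, rfl⟩
      have hle : d * (k + 1) ≤ j := by
        calc d * (k + 1) ≤ d * (j / d) := Nat.mul_le_mul_left d (by omega)
          _ ≤ j := Nat.mul_div_le j d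
      have hpos : 0 < d * (k + 1) := by positivity
      exact ⟨by omega, ⟨k + 1, Nat.sub_sub_self hle⟩⟩
  rw [hset, Finset.card_image_of_injOn, card_range]
  intro a ha b hb hab
  simp only [Finset.coe_range, Set.mem_Iio] at ha hb
  have ha' : d * (a + 1) ≤ j :=
    calc d * (a + 1) ≤ d * (j / d) := Nat.mul_le_mul_left d (by omega)
      _ ≤ j := Nat.mul_div_le j d
  have hb' : d * (b + 1) ≤ j :=
    calc d * (b + 1) ≤ d * (j / d) := Nat.mul_le_mul_left d (by omega)
      _ ≤ j := Nat.mul_div_le j d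
  have hab' : j - d * (a + 1) = j - d * (b + 1) := hab
  have h1 : d * (a + 1) = d * (b + 1) := by omega
  have := Nat.eq_of_mul_eq_mul_left hd h1
  omega

lemma sum_div_range (d t : ℕ) (hd : 0 < d) :
    ∑ j ∈ range (d * t), j / d = d * t.choose 2 := by
  induction t with
  | zero => simp
  | succ n ih =>
    have h1 : d * (n + 1) = d * n + d := by ring
    rw [h1, Finset.sum_range_add]
    have h2 : ∑ i ∈ range d, (d * n + i) / d = ∑ _i ∈ range d, n := by
      refine Finset.sum_congr rfl fun i hi => ?_
      rw [Nat.mul_add_div hd, Nat.div_eq_of_lt (mem_range.mp hi)]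
      omega
    rw [ih, h2, Finset.sum_const, card_range, smul_eq_mul]
    have h3 : (n + 1).choose 2 = n.choose 2 + n := by
      rw [Nat.choose_succ_succ]
      simp [Nat.choose_one_right, Nat.add_comm]
    rw [h3]; ring

lemma card_dvd_pairs (m d : ℕ) (hd : 0 < d) (hdm : d ∣ m) :
    #((range m ×ˢ range m).filter fun p : ℕ × ℕ => p.1 < p.2 ∧ d ∣ (p.2 - p.1)) =
      (m / d).choose 2 * d := by
  classical
  rw [card_pairs m (fun i j => d ∣ (j - i))]
  rw [Finset.sum_congr rfl (fun j _ => fiber_card d j hd)]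
  obtain ⟨t, rfl⟩ := hdm
  rw [sum_div_range d t hd, Nat.mul_div_cancel_left t hd, Nat.mul_comm]

end Aux

theorem stmt12 (q m d : ℕ) (hq : IsPrimePow q) (hm : 2 ≤ m) (K : Type) [Field K] [Fintype K]
    (hK : Fintype.card K = q ^ m) (δ : K) (hδ : δ ^ q ≠ δ)
    (hd1 : 1 < d) (hdm : d ∣ m) (hδd : δ ^ q ^ d = δ)
    (hmin : ∀ e, 1 < e → e ∣ m → δ ^ q ^ e = δ → d ≤ e) :
    Submodule.span K {g : Polynomial K | ∃ α β : K,
        g = trPoly q m K α * trPoly q m K (β * δ) -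
            trPoly q m K (α * δ) * trPoly q m K β} =
      Submodule.span K {g : Polynomial K | ∃ i j : ℕ, i < j ∧ j ≤ m - 1 ∧ ¬ d ∣ (j - i) ∧
        g = C (δ ^ q ^ j - δ ^ q ^ i) * X ^ (q ^ i + q ^ j)} ∧
    Module.finrank K ↥(Submodule.span K {g : Polynomial K |
        ∃ i j : ℕ, i < j ∧ j ≤ m - 1 ∧ ¬ d ∣ (j - i) ∧
          g = C (δ ^ q ^ j - δ ^ q ^ i) * X ^ (q ^ i + q ^ j)}) =
      Nat.choose m 2 - Nat.choose (m / d) 2 * d := by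
  classical
  have hq2 : 2 ≤ q := hq.two_le
  set N : ℕ → ℕ → Polynomial K :=
    fun i j => C (δ ^ q ^ j - δ ^ q ^ i) * X ^ (q ^ i + q ^ j) with hN
  set Fset : Set (Polynomial K) := {g : Polynomial K | ∃ α β : K,
      g = trPoly q m K α * trPoly q m K (β * δ) -
          trPoly q m K (α * δ) * trPoly q m K β} with hFset
  set Mset : Set (Polynomial K) := {g : Polynomial K |
      ∃ i j : ℕ, i < j ∧ j ≤ m - 1 ∧ ¬ d ∣ (j - i) ∧
        g = C (δ ^ q ^ j - δ ^ q ^ i) * X ^ (q ^ i + q ^ j)} with hMset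
  have heqiff : ∀ i j : ℕ, i ≤ j → i ≤ m → (δ ^ q ^ j = δ ^ q ^ i ↔ d ∣ (j - i)) :=
    fun i j hij him => frob_eq_iff q m d hm hK δ hδ hd1 hδd hmin hq2 i j hij him
  -- each N i j for i, j < m lies in span Mset
  have hNmem : ∀ i < m, ∀ j < m, N i j ∈ Submodule.span K Mset := by
    intro i hi j hj
    rcases lt_trichotomy i j with hij | rfl | hij
    · by_cases hdd : d ∣ (j - i)
      · have : δ ^ q ^ j = δ ^ q ^ i := (heqiff i j (le_of_lt hij) (by omega)).mpr hdd
        have : N i j = 0 := by rw [hN]; simp [this]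
        rw [this]; exact Submodule.zero_mem _
      · exact Submodule.subset_span ⟨i, j, hij, by omega, hdd, rfl⟩
    · have : N i i = 0 := by rw [hN]; simp
      rw [this]; exact Submodule.zero_mem _
    · have hneg : N i j = - N j i := by
        rw [hN]; simp only
        rw [show (δ ^ q ^ j - δ ^ q ^ i) = -(δ ^ q ^ i - δ ^ q ^ j) by ring, map_neg]
        rw [show q ^ i + q ^ j = q ^ j + q ^ i by ring]
        ring
      by_cases hdd : d ∣ (i - j)
      · have : δ ^ q ^ i = δ ^ q ^ j := (heqiff j i (le_of_lt hij) (by omega)).mpr hdd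
        have hz : N i j = 0 := by rw [hN]; simp [this]
        rw [hz]; exact Submodule.zero_mem _
      · rw [hneg]
        exact Submodule.neg_mem _ (Submodule.subset_span ⟨j, i, hij, by omega, hdd, rfl⟩)
  -- span F ≤ span M
  have hle1 : Submodule.span K Fset ≤ Submodule.span K Mset := by
    rw [Submodule.span_le]
    rintro g ⟨α, β, rfl⟩
    rw [f_expand]
    refine Submodule.sum_mem _ fun i hi => Submodule.sum_mem _ fun j hj => ?_
    exact Submodule.smul_mem _ _ (hNmem i (mem_range.mp hi) j (mem_range.mp hj))
  -- span M ≤ span F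
  have hle2 : Submodule.span K Mset ≤ Submodule.span K Fset := by
    rw [Submodule.span_le]
    rintro g ⟨i, j, hij, hjm, hdd, rfl⟩
    have hjm' : j < m := by omega
    by_contra hg
    obtain ⟨φ, hφx, hφmap⟩ :=
      Submodule.exists_dual_map_eq_bot_of_notMem hg inferInstance
    have hzero : ∀ α β : K,
        ∑ i' ∈ range m, ∑ j' ∈ range m,
          φ (N i' j') * α ^ q ^ i' * β ^ q ^ j' = 0 := by
      intro α β
      have hf : (trPoly q m K α * trPoly q m K (β * δ) -
          trPoly q m K (α * δ) * trPoly q m K β) ∈ Submodule.span K Fset :=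
        Submodule.subset_span ⟨α, β, rfl⟩
      have hφf : φ (trPoly q m K α * trPoly q m K (β * δ) -
          trPoly q m K (α * δ) * trPoly q m K β) = 0 := by
        have : φ (trPoly q m K α * trPoly q m K (β * δ) -
            trPoly q m K (α * δ) * trPoly q m K β) ∈
            Submodule.map φ (Submodule.span K Fset) := ⟨_, hf, rfl⟩
        rw [hφmap] at this
        exact (Submodule.mem_bot K).mp this
      rw [f_expand] at hφf
      rw [map_sum] at hφf
      rw [← hφf]
      refine Finset.sum_congr rfl fun i' _ => ?_
      rw [map_sum]
      refine Finset.sum_congr rfl fun j' _ => ?_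
      rw [map_smul, smul_eq_mul]
      ring
    have := vanish_bilin q m hq2 K hK (fun i' j' => φ (N i' j')) hzero i (by omega) j hjm'
    exact hφx this
  refine ⟨le_antisymm hle1 hle2, ?_⟩
  -- dimension count
  set S : Finset (ℕ × ℕ) :=
    (range m ×ˢ range m).filter (fun p : ℕ × ℕ => p.1 < p.2 ∧ ¬ d ∣ (p.2 - p.1)) with hS
  have hSmem : ∀ p : ℕ × ℕ, p ∈ S ↔ p.1 < m ∧ p.2 < m ∧ p.1 < p.2 ∧ ¬ d ∣ (p.2 - p.1) := by
    intro p
    rw [hS, mem_filter, mem_product, mem_range, mem_range]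
    tauto
  -- Mset as image of S
  have hMim : Mset = (fun p : ℕ × ℕ => N p.1 p.2) '' ↑S := by
    ext g
    constructor
    · rintro ⟨i, j, hij, hjm, hdd, rfl⟩
      exact ⟨(i, j), by rw [Finset.mem_coe, hSmem]; exact ⟨by omega, by omega, hij, hdd⟩, rfl⟩
    · rintro ⟨⟨i, j⟩, hp, rfl⟩
      rw [Finset.mem_coe, hSmem] at hp
      exact ⟨i, j, hp.2.2.1, by omega, hp.2.2.2, rfl⟩
  -- linear independence
  have hli : LinearIndependent K (fun p : S => N p.1.1 p.1.2) := by
    have hinj : Function.Injective (fun p : S => q ^ p.1.1 + q ^ p.1.2) := by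
      rintro ⟨⟨i, j⟩, hij⟩ ⟨⟨i', j'⟩, hij'⟩ h
      rw [hSmem] at hij hij'
      simp only at h
      have := exp_inj q hq2 hij.2.2.1 hij'.2.2.1 h
      exact Subtype.ext (Prod.ext_iff.mpr this)
    have hmon : LinearIndependent K
        (fun p : S => (X : Polynomial K) ^ (q ^ p.1.1 + q ^ p.1.2)) := by
      have hb := (Polynomial.basisMonomials K).linearIndependent
      have := hb.comp (fun p : S => q ^ p.1.1 + q ^ p.1.2) hinj
      convert this using 2 with p
      simp only [Function.comp_apply, Polynomial.coe_basisMonomials]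
      rw [Polynomial.X_pow_eq_monomial]
    have hcne : ∀ p : S, δ ^ q ^ p.1.2 - δ ^ q ^ p.1.1 ≠ 0 := by
      rintro ⟨⟨i, j⟩, hij⟩
      rw [hSmem] at hij
      simp only
      intro hc
      have : δ ^ q ^ j = δ ^ q ^ i := by linear_combination hc
      exact hij.2.2.2 ((heqiff i j (by omega) (by omega)).mp this)
    have := hmon.units_smul (fun p : S => Units.mk0 _ (hcne p))
    convert this using 2 with p
    rw [hN]
    simp only [Pi.smul_apply', Units.smul_mk0]
    rw [Polynomial.smul_eq_C_mul]
  have hrange : Set.range (fun p : S => N p.1.1 p.1.2) = Mset := by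
    rw [hMim]
    ext g
    simp only [Set.mem_range, Set.mem_image, Finset.mem_coe]
    constructor
    · rintro ⟨⟨p, hp⟩, rfl⟩; exact ⟨p, hp, rfl⟩
    · rintro ⟨p, hp, rfl⟩; exact ⟨⟨p, hp⟩, rfl⟩
  have hfr : Module.finrank K ↥(Submodule.span K Mset) = Fintype.card S := by
    rw [← hrange]
    exact finrank_span_eq_card hli
  rw [hfr, Fintype.card_coe]
  -- cardinality of S
  have hsplit :
      #((range m ×ˢ range m).filter fun p : ℕ × ℕ => p.1 < p.2 ∧ d ∣ (p.2 - p.1)) + #S =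
        #((range m ×ˢ range m).filter fun p : ℕ × ℕ => p.1 < p.2) := by
    rw [hS]
    have h1 : ((range m ×ˢ range m).filter fun p : ℕ × ℕ => p.1 < p.2 ∧ d ∣ (p.2 - p.1)) =
        ((range m ×ˢ range m).filter fun p : ℕ × ℕ => p.1 < p.2).filter
          fun p => d ∣ (p.2 - p.1) := by
      rw [Finset.filter_filter]
    have h2 : ((range m ×ˢ range m).filter fun p : ℕ × ℕ => p.1 < p.2 ∧ ¬ d ∣ (p.2 - p.1)) =
        ((range m ×ˢ range m).filter fun p : ℕ × ℕ => p.1 < p.2).filter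
          fun p => ¬ d ∣ (p.2 - p.1) := by
      rw [Finset.filter_filter]
    rw [h1, h2]
    exact Finset.card_filter_add_card_filter_not _
  rw [card_lt_pairs, card_dvd_pairs m d (by omega) hdm] at hsplit
  omega
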